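/- arXiv:1406.4573 — 5 statements merged into one kernel-verified Lean document; each statement's English description precedes it below -/
import Mathlib

section
/- With c₁ = √((λ−μ−ψ)² + 4λψ), c₂ = −(λ−μ−ψ)/c₁ and p₀ as defined, the function p₀ satisfies the ODE p₀'(x) = −(λ+μ+ψ)p₀(x) + μ + λ·p₀(x)², for all x ≥ 0, with initial condition p₀(0) = 1. -/
noncomputable def p0 (lam mu psi : ℝ) (x : ℝ) : ℝ :=
  let c1 := Real.sqrt ((lam - mu - psi)^2 + 4*lam*psi)
  let c2 := -(lam - mu - psi) / c1
  (lam + mu + psi + c1 * ((Real.exp (-c1*x) * (1 - c2) - (1 + c2)) /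
    (Real.exp (-c1*x) * (1 - c2) + (1 + c2)))) / (2*lam)

theorem stmt2 (lam mu psi : ℝ) (hlam : 0 < lam) (hmu : 0 < mu) (hpsi : 0 < psi) :
    p0 lam mu psi 0 = 1 ∧
    ∀ x : ℝ, 0 ≤ x →
      HasDerivAt (p0 lam mu psi)
        (-(lam + mu + psi) * p0 lam mu psi x + mu + lam * (p0 lam mu psi x)^2) x := by
  have h4 : 0 < 4*lam*psi := by positivity
  have hKpos : 0 < (lam - mu - psi)^2 + 4*lam*psi := by nlinarith [sq_nonneg (lam-mu-psi)]
  set c1 := Real.sqrt ((lam - mu - psi)^2 + 4*lam*psi) with hc1def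
  have hc1sq : c1^2 = (lam - mu - psi)^2 + 4*lam*psi := Real.sq_sqrt hKpos.le
  have hc1pos : 0 < c1 := Real.sqrt_pos.mpr hKpos
  set c2 : ℝ := -(lam - mu - psi) / c1 with hc2def
  have hc2sq : c2^2 < 1 := by
    rw [hc2def, div_pow]
    rw [div_lt_one (by positivity)]
    nlinarith [hc1sq]
  have h1m : 0 < 1 - c2 := by nlinarith [hc2sq]
  have h1p : 0 < 1 + c2 := by nlinarith [hc2sq]
  have hc1c2 : c1 * c2 = -(lam - mu - psi) := by
    rw [hc2def]; field_simp
  have hfun : p0 lam mu psi = fun y =>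
      (lam + mu + psi + c1 * ((Real.exp (-c1*y) * (1 - c2) - (1 + c2)) /
        (Real.exp (-c1*y) * (1 - c2) + (1 + c2)))) / (2*lam) := by
    funext y
    simp only [p0]
    rfl
  constructor
  · rw [hfun]
    simp only [mul_zero, neg_zero, Real.exp_zero, one_mul]
    have hden : (1:ℝ) - c2 + (1 + c2) = 2 := by ring
    have hnum : (1:ℝ) - c2 - (1 + c2) = -2*c2 := by ring
    rw [hden, hnum, div_eq_one_iff_eq (by positivity : (2:ℝ)*lam ≠ 0)]
    linear_combination -hc1c2
  · intro x hx
    have hDpos : 0 < Real.exp (-c1*x) * (1 - c2) + (1 + c2) := by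
      have := Real.exp_pos (-c1*x)
      nlinarith
    have hE : HasDerivAt (fun y => Real.exp (-c1*y)) (Real.exp (-c1*x) * (-c1)) x := by
      simpa using ((hasDerivAt_id x).const_mul (-c1)).exp
    have hN := (hE.mul_const (1 - c2)).sub_const (1 + c2)
    have hD := (hE.mul_const (1 - c2)).add_const (1 + c2)
    have hf := hN.div hD hDpos.ne'
    have hp := ((hf.const_mul c1).const_add (lam + mu + psi)).div_const (2*lam)
    rw [hfun]
    refine hp.congr_deriv ?_
    symm
    have hA : (lam + mu + psi)^2 = c1^2 + 4*lam*mu := by rw [hc1sq]; ring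
    clear_value c1 c2
    field_simp
    linear_combination (-(Real.exp (-(c1*x)) * (1 - c2) + (1 + c2))^2) * hA
end

section
/- With c₁, c₂ as above and q(x) = 4/(2(1−c₂²) + e^{−c₁x}(1−c₂)² + e^{c₁x}(1+c₂)²), the function q satisfies q(0) = 1 and q'(x) = −(λ+μ+ψ)q(x) + 2λ·p₀(x)·q(x) for all x ≥ 0. -/
noncomputable def q (lam mu psi : ℝ) (x : ℝ) : ℝ :=
  let c1 := Real.sqrt ((lam - mu - psi)^2 + 4*lam*psi)
  let c2 := -(lam - mu - psi) / c1
  4 / (2*(1 - c2^2) + Real.exp (-c1*x) * (1 - c2)^2 + Real.exp (c1*x) * (1 + c2)^2)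

lemma key (c1 c2 u v s lam : ℝ) (hlam : lam ≠ 0) (huv : u*v = 1)
    (hD : (2*(1-c2^2)+u*(1-c2)^2+v*(1+c2)^2) ≠ 0)
    (hden : u*(1-c2)+(1+c2) ≠ 0) :
    -s * (4/(2*(1-c2^2)+u*(1-c2)^2+v*(1+c2)^2))
      + 2*lam*((s + c1*((u*(1-c2)-(1+c2))/(u*(1-c2)+(1+c2))))/(2*lam))
        * (4/(2*(1-c2^2)+u*(1-c2)^2+v*(1+c2)^2))
    = (0*(2*(1-c2^2)+u*(1-c2)^2+v*(1+c2)^2) - 4*(-c1*u*(1-c2)^2 + c1*v*(1+c2)^2))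
        /(2*(1-c2^2)+u*(1-c2)^2+v*(1+c2)^2)^2 := by
  set D := 2*(1-c2^2)+u*(1-c2)^2+v*(1+c2)^2 with hDdef
  set E := (u*(1-c2)-(1+c2))/(u*(1-c2)+(1+c2)) with hEdef
  have h2 : 2*lam*((s + c1*E)/(2*lam)) = s + c1*E := by
    field_simp
  rw [h2]
  have hE : E * D = u*(1-c2)^2 - v*(1+c2)^2 := by
    rw [hEdef, div_mul_eq_mul_div, div_eq_iff hden, hDdef]
    linear_combination 2*(1-c2)*(1+c2)^2*huv
  have step : -s * (4/D) + (s + c1*E)*(4/D) = c1*(E*D)*(4/D^2) := by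
    field_simp; ring
  rw [step, hE]
  field_simp
  ring

theorem stmt3 (lam mu psi : ℝ) (hlam : 0 < lam) (hmu : 0 < mu) (hpsi : 0 < psi) :
    q lam mu psi 0 = 1 ∧
    ∀ x : ℝ, 0 ≤ x →
      HasDerivAt (q lam mu psi)
        (-(lam + mu + psi) * q lam mu psi x + 2 * lam * p0 lam mu psi x * q lam mu psi x) x := by
  set c1 := Real.sqrt ((lam - mu - psi)^2 + 4*lam*psi) with hc1
  set c2 := -(lam - mu - psi) / c1 with hc2
  have hc1pos : 0 < c1 := Real.sqrt_pos.mpr (by nlinarith)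
  have habs : |lam - mu - psi| < c1 := by
    rw [hc1, ← Real.sqrt_sq_eq_abs]
    exact Real.sqrt_lt_sqrt (sq_nonneg _) (by nlinarith)
  have hc2lt : |c2| < 1 := by
    rw [hc2, abs_div, abs_neg, abs_of_pos hc1pos, div_lt_one hc1pos]; exact habs
  have ha : 0 < 1 - c2 := by have := abs_lt.mp hc2lt; linarith [this.2]
  have hb : 0 < 1 + c2 := by have := abs_lt.mp hc2lt; linarith [this.1]
  have hq : q lam mu psi = fun x => 4 / (2*(1 - c2^2) + Real.exp (-c1*x) * (1 - c2)^2 + Real.exp (c1*x) * (1 + c2)^2) := rfl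
  have hfpos : ∀ x : ℝ, 0 < 2*(1 - c2^2) + Real.exp (-c1*x) * (1 - c2)^2 + Real.exp (c1*x) * (1 + c2)^2 := by
    intro x
    have h1 := Real.exp_pos (-c1*x)
    have h2 := Real.exp_pos (c1*x)
    nlinarith [sq_nonneg (1-c2), sq_nonneg (1+c2)]
  constructor
  · rw [hq]
    simp only [mul_zero, neg_zero, Real.exp_zero, one_mul]
    rw [div_eq_one_iff_eq (by have := hfpos 0; simpa using (ne_of_gt this))]
    ring
  · intro x _
    have hp0 : p0 lam mu psi x = (lam + mu + psi + c1 * ((Real.exp (-c1*x) * (1 - c2) - (1 + c2)) /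
      (Real.exp (-c1*x) * (1 - c2) + (1 + c2)))) / (2*lam) := rfl
    set u := Real.exp (-c1*x) with hu
    set v := Real.exp (c1*x) with hv
    have hupos : 0 < u := Real.exp_pos _
    have hvpos : 0 < v := Real.exp_pos _
    have huv : u * v = 1 := by rw [hu, hv, ← Real.exp_add]; simp
    have hden : 0 < u * (1 - c2) + (1 + c2) := by positivity
    have hf : HasDerivAt (fun y => 2*(1 - c2^2) + Real.exp (-c1*y) * (1 - c2)^2 + Real.exp (c1*y) * (1 + c2)^2)
        (-c1 * u * (1 - c2)^2 + c1 * v * (1 + c2)^2) x := by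
      have h1 : HasDerivAt (fun y : ℝ => Real.exp (-c1*y)) (-c1 * u) x := by
        have := ((hasDerivAt_id x).const_mul (-c1)).exp
        simpa [hu, mul_comm] using this
      have h2 : HasDerivAt (fun y : ℝ => Real.exp (c1*y)) (c1 * v) x := by
        have := ((hasDerivAt_id x).const_mul c1).exp
        simpa [hv, mul_comm] using this
      have := ((hasDerivAt_const x (2*(1 - c2^2))).add (h1.mul_const ((1 - c2)^2))).add (h2.mul_const ((1 + c2)^2))
      refine this.congr_deriv ?_
      ring
    have hne : (2*(1 - c2^2) + u * (1 - c2)^2 + v * (1 + c2)^2) ≠ 0 := ne_of_gt (hfpos x)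
    have hd := (hasDerivAt_const x (4:ℝ)).div hf hne
    rw [hq]
    refine hd.congr_deriv ?_
    rw [hp0]
    exact (key c1 c2 u v (lam+mu+psi) lam (ne_of_gt hlam) huv hne (ne_of_gt hden)).symm
end

section
/- If λ−μ−ψ = λ'−μ'−ψ' and λψ = λ'ψ', then λ·(1 − p₀(x; λ,μ,ψ)) = λ'·(1 − p₀(x; λ',μ',ψ')) for all x ≥ 0, where p₀(x; λ,μ,ψ) denotes the no-sampled-descendant probability with parameters (λ,μ,ψ). -/
noncomputable def g (d f x : ℝ) : ℝ :=
  let c1 := Real.sqrt (d^2 + 4*f)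
  let c2 := -d / c1
  (d - c1 * ((Real.exp (-c1*x) * (1 - c2) - (1 + c2)) /
    (Real.exp (-c1*x) * (1 - c2) + (1 + c2)))) / 2

lemma p0_eq_g (lam mu psi x : ℝ) (hlam : lam ≠ 0) :
    lam * (1 - p0 lam mu psi x) = g (lam - mu - psi) (lam * psi) x := by
  unfold p0 g
  have h : 4 * lam * psi = 4 * (lam * psi) := by ring
  simp only [h]
  field_simp
  ring

theorem stmt6 (lam mu psi lam' mu' psi' : ℝ)
    (hlam : 0 < lam) (hmu : 0 < mu) (hpsi : 0 < psi)
    (hlam' : 0 < lam') (hmu' : 0 < mu') (hpsi' : 0 < psi')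
    (hd : lam - mu - psi = lam' - mu' - psi')
    (hf : lam * psi = lam' * psi') :
    ∀ x : ℝ, 0 ≤ x →
      lam * (1 - p0 lam mu psi x) = lam' * (1 - p0 lam' mu' psi' x) := by
  intro x hx
  rw [p0_eq_g lam mu psi x hlam.ne', p0_eq_g lam' mu' psi' x hlam'.ne', hd, hf]
end

section
/- In the skyline sampled ancestor model, the function g_{i,e}(t) = g_{i,e}(t_e)·q_i(t)/q_i(t_e) solves the ODE d/dt g_{i,e}(t) = −(λ_i+μ_i+ψ_i)·g_{i,e}(t) + 2λ_i·p_i(t)·g_{i,e}(t) on [t_e, t_b] with the given initial value at t_e, where q_i(t) = 4e^{A_i(t−t_i)}/(e^{A_i(t−t_i)}(1+B_i) + (1−B_i))² and p_i(t) = (λ_i+μ_i+ψ_i − A_i·(e^{A_i(t−t_i)}(1+B_i) − (1−B_i))/(e^{A_i(t−t_i)}(1+B_i) + (1−B_i)))/(2λ_i). -/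
theorem stmt9 (lam mu psi A B ti te tb ge : ℝ)
    (hlam : 0 < lam) (hmu : 0 < mu) (hpsi : 0 < psi)
    (htetb : te ≤ tb)
    (qi : ℝ → ℝ)
    (hqi : qi = fun t => 4 * Real.exp (A*(t - ti)) /
      (Real.exp (A*(t - ti)) * (1 + B) + (1 - B))^2)
    (pi : ℝ → ℝ)
    (hpi : pi = fun t => (lam + mu + psi - A * ((Real.exp (A*(t - ti)) * (1 + B) - (1 - B)) /
      (Real.exp (A*(t - ti)) * (1 + B) + (1 - B)))) / (2*lam))
    (hden : ∀ t ∈ Set.Icc te tb, Real.exp (A*(t - ti)) * (1 + B) + (1 - B) ≠ 0) :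
    (fun t => ge * qi t / qi te) te = ge ∧
    ∀ t ∈ Set.Icc te tb,
      HasDerivAt (fun s => ge * qi s / qi te)
        (-(lam + mu + psi) * (ge * qi t / qi te)
          + 2 * lam * pi t * (ge * qi t / qi te)) t := by
  subst hqi hpi
  have hte : te ∈ Set.Icc te tb := ⟨le_rfl, htetb⟩
  have hDe : Real.exp (A*(te - ti)) * (1 + B) + (1 - B) ≠ 0 := hden te hte
  have hqte : (4 * Real.exp (A*(te - ti)) /
      (Real.exp (A*(te - ti)) * (1 + B) + (1 - B))^2) ≠ 0 := by
    apply div_ne_zero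
    · positivity
    · exact pow_ne_zero _ hDe
  constructor
  · simp only []
    rw [mul_div_assoc, div_self hqte, mul_one]
  · intro t ht
    have hD : Real.exp (A*(t - ti)) * (1 + B) + (1 - B) ≠ 0 := hden t ht
    have hE : HasDerivAt (fun s : ℝ => Real.exp (A*(s - ti)))
        (A * Real.exp (A*(t - ti))) t := by
      have h1 : HasDerivAt (fun s : ℝ => A * (s - ti)) A t := by
        simpa using ((hasDerivAt_id t).sub_const ti).const_mul A
      simpa [mul_comm] using h1.exp
    have hnum : HasDerivAt (fun s : ℝ => 4 * Real.exp (A*(s - ti)))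
        (4 * (A * Real.exp (A*(t - ti)))) t := hE.const_mul 4
    have hDen : HasDerivAt (fun s : ℝ =>
        (Real.exp (A*(s - ti)) * (1 + B) + (1 - B))^2)
        (2 * (Real.exp (A*(t - ti)) * (1 + B) + (1 - B)) *
          (A * Real.exp (A*(t - ti)) * (1 + B))) t := by
      have h2 : HasDerivAt (fun s : ℝ =>
          Real.exp (A*(s - ti)) * (1 + B) + (1 - B))
          (A * Real.exp (A*(t - ti)) * (1 + B)) t :=
        (hE.mul_const (1 + B)).add_const (1 - B)
      have h3 : HasDerivAt (fun s : ℝ =>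
          (Real.exp (A*(s - ti)) * (1 + B) + (1 - B)) * (Real.exp (A*(s - ti)) * (1 + B) + (1 - B)))
          (2 * (Real.exp (A*(t - ti)) * (1 + B) + (1 - B)) *
            (A * Real.exp (A*(t - ti)) * (1 + B))) t := (h2.mul h2).congr_deriv (by ring)
      simpa [pow_two] using h3
    have hq : HasDerivAt (fun s : ℝ => 4 * Real.exp (A*(s - ti)) /
        (Real.exp (A*(s - ti)) * (1 + B) + (1 - B))^2)
        ((4 * (A * Real.exp (A*(t - ti))) *
            (Real.exp (A*(t - ti)) * (1 + B) + (1 - B))^2 -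
          4 * Real.exp (A*(t - ti)) *
            (2 * (Real.exp (A*(t - ti)) * (1 + B) + (1 - B)) *
              (A * Real.exp (A*(t - ti)) * (1 + B)))) /
          ((Real.exp (A*(t - ti)) * (1 + B) + (1 - B))^2)^2) t :=
      hnum.div hDen (pow_ne_zero _ hD)
    have hg := (hq.const_mul ge).div_const
      (4 * Real.exp (A*(te - ti)) / (Real.exp (A*(te - ti)) * (1 + B) + (1 - B))^2)
    refine hg.congr_deriv ?_
    have hEt : Real.exp (A*(t - ti)) ≠ 0 := Real.exp_ne_zero _
    have hEe : Real.exp (A*(te - ti)) ≠ 0 := Real.exp_ne_zero _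
    field_simp
    ring
end

section
/- The probability that a lineage alive at time t before the present survives to the present and is ρ-sampled, 1 − p̂₀(t) = ρ(λ−μ)/(λρ + (λ(1−ρ)−μ)e^{−(λ−μ)t}), satisfies λ·(1 − p̂₀(t)) = λρ(λ−μ)/(λρ + (λ−μ−λρ)e^{−(λ−μ)t}), which depends on (λ, μ, ρ) only through λ−μ and λρ. In particular, if λ−μ = λ'−μ' and λρ = λ'ρ', then λ(1−p̂₀(t)) = λ'(1−p̂₀'(t)) for all t. -/
noncomputable def phat0 (lam mu rho : ℝ) (t : ℝ) : ℝ :=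
  1 - rho * (lam - mu) / (lam * rho + (lam * (1 - rho) - mu) * Real.exp (-(lam - mu) * t))

lemma aux18 (lam mu rho t : ℝ) :
    lam * (1 - phat0 lam mu rho t)
      = lam * rho * (lam - mu) /
        (lam * rho + (lam - mu - lam * rho) * Real.exp (-(lam - mu) * t)) := by
  have h : lam * (1 - rho) - mu = lam - mu - lam * rho := by ring
  simp only [phat0, h, sub_sub_cancel, mul_div_assoc']
  ring_nf

theorem stmt18 (lam mu rho lam' mu' rho' : ℝ)
    (hmu : 0 < mu) (hlm : mu < lam) (hrho0 : 0 < rho) (hrho1 : rho ≤ 1)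
    (hmu' : 0 < mu') (hlm' : mu' < lam') (hrho0' : 0 < rho') (hrho1' : rho' ≤ 1)
    (hd : lam - mu = lam' - mu') (hlr : lam * rho = lam' * rho') :
    (∀ t : ℝ, lam * (1 - phat0 lam mu rho t)
        = lam * rho * (lam - mu) /
          (lam * rho + (lam - mu - lam * rho) * Real.exp (-(lam - mu) * t))) ∧
    ∀ t : ℝ, lam * (1 - phat0 lam mu rho t) = lam' * (1 - phat0 lam' mu' rho' t) := by
  refine ⟨fun t => aux18 lam mu rho t, fun t => ?_⟩
  rw [aux18, aux18, ← hd, ← hlr]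
end
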